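/- Let (u_i) be a sequence in (0,1) with u_i ≤ C·a^{−i} for some C > 0 and a > 1. Then there exists M ≥ 0 such that 1 − Π_{i=k}^∞ (1−u_i)/(1+u_i) ≤ M·a^{−k} for all k ≥ 0. -/
import Mathlib

private lemma aux_prod_bound (p : ℕ → ℝ) (hp0 : ∀ i, 0 ≤ p i) (hp1 : ∀ i, p i ≤ 1) :
    ∀ n : ℕ, 1 - ∏ i ∈ Finset.range n, p i ≤ ∑ i ∈ Finset.range n, (1 - p i) := by
  intro n
  induction n with
  | zero => simp
  | succ n ih =>
    rw [Finset.prod_range_succ, Finset.sum_range_succ]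
    have hP0 : 0 ≤ ∏ i ∈ Finset.range n, p i := Finset.prod_nonneg fun i _ => hp0 i
    have hP1 : ∏ i ∈ Finset.range n, p i ≤ 1 :=
      Finset.prod_le_one (fun i _ => hp0 i) (fun i _ => hp1 i)
    nlinarith [hp0 n, hp1 n]

theorem stmt6 (u : ℕ → ℝ) (C a : ℝ) (hC : 0 < C) (ha : 1 < a)
    (hu : ∀ i, u i ∈ Set.Ioo (0:ℝ) 1)
    (hbound : ∀ i : ℕ, u i ≤ C * a ^ (-(i:ℝ))) :
    ∃ M : ℝ, 0 ≤ M ∧ ∀ k : ℕ,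
      1 - ∏' i : ℕ, ((1 - u (k + i)) / (1 + u (k + i))) ≤ M * a ^ (-(k:ℝ)) := by
  have ha0 : (0:ℝ) < a := lt_trans one_pos ha
  have hai : (0:ℝ) < a⁻¹ := inv_pos.mpr ha0
  have hai1 : a⁻¹ < 1 := inv_lt_one_of_one_lt₀ ha
  have hrpow : ∀ m : ℕ, a ^ (-(m:ℝ)) = (a⁻¹) ^ m := by
    intro m
    rw [Real.rpow_neg ha0.le, Real.rpow_natCast, inv_pow]
  set M : ℝ := 2 * C * (1 - a⁻¹)⁻¹ with hM
  have hM0 : 0 ≤ M := by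
    have : (0:ℝ) < (1 - a⁻¹)⁻¹ := inv_pos.mpr (by linarith)
    positivity
  refine ⟨M, hM0, fun k => ?_⟩
  set p : ℕ → ℝ := fun i => (1 - u (k + i)) / (1 + u (k + i)) with hp
  have hden : ∀ i, (0:ℝ) < 1 + u (k + i) := fun i => by
    have := (hu (k + i)).1; linarith
  have hp0 : ∀ i, 0 ≤ p i := fun i => by
    have := (hu (k + i)).2
    exact div_nonneg (by linarith) (hden i).le
  have hp1 : ∀ i, p i ≤ 1 := fun i => by
    have := (hu (k + i)).1
    rw [div_le_one (hden i)]; linarith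
  -- bound on 1 - p i
  have hkey : ∀ i, 1 - p i ≤ 2 * C * ((a⁻¹) ^ k * (a⁻¹) ^ i) := by
    intro i
    have h2 : 1 - p i ≤ 2 * u (k + i) := by
      have hq : 1 - 2 * u (k + i) ≤ p i := by
        rw [hp, le_div_iff₀ (hden i)]
        nlinarith [(hu (k + i)).1]
      linarith
    have h3 : u (k + i) ≤ C * ((a⁻¹) ^ k * (a⁻¹) ^ i) := by
      have := hbound (k + i)
      rwa [hrpow (k + i), pow_add] at this
    linarith
  -- bound on partial sums
  have hsum : ∀ n : ℕ, ∑ i ∈ Finset.range n, (1 - p i) ≤ M * (a⁻¹) ^ k := by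
    intro n
    calc ∑ i ∈ Finset.range n, (1 - p i)
        ≤ ∑ i ∈ Finset.range n, 2 * C * ((a⁻¹) ^ k * (a⁻¹) ^ i) :=
          Finset.sum_le_sum fun i _ => hkey i
      _ = 2 * C * (a⁻¹) ^ k * ∑ i ∈ Finset.range n, (a⁻¹) ^ i := by
          rw [Finset.mul_sum]; exact Finset.sum_congr rfl fun x _ => by ring
      _ ≤ 2 * C * (a⁻¹) ^ k * (1 - a⁻¹)⁻¹ := by
          have hg : ∑ i ∈ Finset.range n, (a⁻¹) ^ i ≤ (1 - a⁻¹)⁻¹ := by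
            have := Summable.sum_le_tsum (Finset.range n)
              (fun i _ => (pow_pos hai i).le)
              (summable_geometric_of_lt_one hai.le hai1)
            rwa [tsum_geometric_of_lt_one hai.le hai1] at this
          have h0 : (0:ℝ) ≤ 2 * C * (a⁻¹) ^ k := by positivity
          exact mul_le_mul_of_nonneg_left hg h0
      _ = M * (a⁻¹) ^ k := by ring
  rw [hrpow k]
  by_cases hmul : Multipliable p
  · have ht := hmul.hasProd.tendsto_prod_nat
    have ht2 : Filter.Tendsto (fun n => 1 - ∏ i ∈ Finset.range n, p i)
        Filter.atTop (nhds (1 - ∏' i, p i)) := tendsto_const_nhds.sub ht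
    exact le_of_tendsto' ht2 fun n => le_trans (aux_prod_bound p hp0 hp1 n) (hsum n)
  · rw [tprod_eq_one_of_not_multipliable hmul]
    simp only [sub_self]
    positivity
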